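/- Let A be a Hurwitz real n×n matrix, P ≻ 0 a real symmetric positive definite n×n matrix, Θ a real antisymmetric n×n matrix, Γ ≻ 0 a real symmetric matrix, and λ > 0 such that ‖Γ^{−1/2} e^{tA} Γ^{1/2}‖ ≤ e^{−λt} for all t ≥ 0. Let S be a d×n real matrix of full row rank, and define τ := (spectral radius of SΘΓ^{−1}ΘᵀSᵀ (SPΓ^{−1}PSᵀ)^{−1})^{1/2}. Then for all u ∈ ℝⁿ and w ∈ ℝ^d, the integral F(u,w) := 2 e^{−½(uᵀPu + wᵀSPSᵀw)} ∫₀^∞ Im e^{−uᵀe^{tA}(P+iΘ)Sᵀw} dt converges absolutely and satisfies |F(u,w)| ≤ (2τ/λ) e^{−½(uᵀPu + wᵀSPSᵀw)} (e^{‖u‖_Γ ‖PSᵀw‖_{Γ^{−1}}} − 1), where ‖x‖_M := (xᵀMx)^{1/2}. -/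

import Mathlib

open Matrix MeasureTheory

noncomputable def mexp {n : ℕ} (A : Matrix (Fin n) (Fin n) ℝ) : Matrix (Fin n) (Fin n) ℝ :=
  NormedSpace.exp A

noncomputable def opNorm {m n : ℕ} (M : Matrix (Fin m) (Fin n) ℝ) : ℝ :=
  ‖LinearMap.toContinuousLinearMap (Matrix.toEuclideanLin M)‖

def Hurwitz {n : ℕ} (A : Matrix (Fin n) (Fin n) ℝ) : Prop :=
  ∀ μ ∈ spectrum ℂ (A.map Complex.ofReal), μ.re < 0

/-- Weighted quadratic norm ‖x‖_M = √(xᵀ M x). -/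
noncomputable def qnorm {n : ℕ} (M : Matrix (Fin n) (Fin n) ℝ) (x : Fin n → ℝ) : ℝ :=
  Real.sqrt (x ⬝ᵥ M.mulVec x)

/-- The integrand Im e^{−uᵀ e^{tA}(P+iΘ)Sᵀw}. -/
noncomputable def Fintegrand {n d : ℕ} (A P Θ : Matrix (Fin n) (Fin n) ℝ)
    (S : Matrix (Fin d) (Fin n) ℝ) (u : Fin n → ℝ) (w : Fin d → ℝ) (t : ℝ) : ℝ :=
  (Complex.exp (-((fun i => ((u i : ℝ) : ℂ)) ⬝ᵥ
    ((mexp (t • A)).map Complex.ofReal *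
      (P.map Complex.ofReal + Complex.I • Θ.map Complex.ofReal) *
      (Sᵀ).map Complex.ofReal).mulVec (fun i => ((w i : ℝ) : ℂ))))).im

section cont
attribute [local instance] Matrix.linftyOpNormedRing Matrix.linftyOpNormedAlgebra

lemma mexp_continuous {n : ℕ} (A : Matrix (Fin n) (Fin n) ℝ) :
    Continuous fun t : ℝ => mexp (t • A) := by
  have h1 : Continuous fun t : ℝ => t • A := continuous_id.smul continuous_const
  exact (NormedSpace.exp_continuous (𝔸 := Matrix (Fin n) (Fin n) ℝ)).comp h1
end cont

lemma cont_dot {n : ℕ} (A : Matrix (Fin n) (Fin n) ℝ) (u x : Fin n → ℝ) :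
    Continuous fun t : ℝ => u ⬝ᵥ (mexp (t • A)).mulVec x := by
  have hm := mexp_continuous A
  have h : (fun t : ℝ => u ⬝ᵥ (mexp (t • A)).mulVec x) =
      fun t : ℝ => ∑ i, u i * ∑ j, mexp (t • A) i j * x j := rfl
  rw [h]
  apply continuous_finset_sum
  intro i _
  apply Continuous.mul continuous_const
  apply continuous_finset_sum
  intro j _
  exact (((continuous_apply j).comp ((continuous_apply i).comp hm))).mul continuous_const

lemma dot_self_eq_normsq {n : ℕ} (x : Fin n → ℝ) :
    Real.sqrt (x ⬝ᵥ x) = ‖(WithLp.equiv 2 (Fin n → ℝ)).symm x‖ := by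
  rw [EuclideanSpace.norm_eq]
  congr 1
  simp [dotProduct, Real.norm_eq_abs, sq_abs, sq]

lemma dot_mulVec_abs_le {m n : ℕ} (M : Matrix (Fin m) (Fin n) ℝ) (x : Fin m → ℝ) (y : Fin n → ℝ) :
    |x ⬝ᵥ M.mulVec y| ≤ opNorm M * Real.sqrt (x ⬝ᵥ x) * Real.sqrt (y ⬝ᵥ y) := by
  set X := (WithLp.equiv 2 (Fin m → ℝ)).symm x
  set Y := (WithLp.equiv 2 (Fin n → ℝ)).symm y
  have h1 : x ⬝ᵥ M.mulVec y =
      inner ℝ X ((LinearMap.toContinuousLinearMap (Matrix.toEuclideanLin M)) Y) := by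
    rw [LinearMap.coe_toContinuousLinearMap']
    rw [Matrix.toEuclideanLin_apply_piLp_toLp]
    simp [PiLp.inner_apply, dotProduct, X, RCLike.inner_apply, mul_comm]
  rw [h1, dot_self_eq_normsq, dot_self_eq_normsq]
  calc |inner ℝ X ((LinearMap.toContinuousLinearMap (Matrix.toEuclideanLin M)) Y)|
      ≤ ‖X‖ * ‖(LinearMap.toContinuousLinearMap (Matrix.toEuclideanLin M)) Y‖ :=
        abs_real_inner_le_norm _ _
    _ ≤ ‖X‖ * (opNorm M * ‖Y‖) := by
        gcongr; exact ContinuousLinearMap.le_opNorm _ _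
    _ = opNorm M * ‖X‖ * ‖Y‖ := by ring

lemma key_est {n : ℕ} (A Γ Γh : Matrix (Fin n) (Fin n) ℝ) (lam : ℝ)
    (hΓh : Γh.PosDef) (hΓhsq : Γh * Γh = Γ)
    (hcontr : ∀ t ≥ (0:ℝ), opNorm (Γh⁻¹ * mexp (t • A) * Γh) ≤ Real.exp (-(lam * t)))
    (u : Fin n → ℝ) {t : ℝ} (ht : 0 ≤ t) (x : Fin n → ℝ) :
    |u ⬝ᵥ (mexp (t • A)).mulVec x| ≤ qnorm Γ u * Real.exp (-(lam * t)) * qnorm Γ⁻¹ x := by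
  have hdet : IsUnit Γh.det := isUnit_iff_ne_zero.mpr (ne_of_gt hΓh.det_pos)
  have hinv : Γh * Γh⁻¹ = 1 := Matrix.mul_nonsing_inv _ hdet
  have hinv' : Γh⁻¹ * Γh = 1 := Matrix.nonsing_inv_mul _ hdet
  have hsymm : Γhᵀ = Γh := hΓh.1
  have hsyminv : (Γh⁻¹)ᵀ = Γh⁻¹ := by rw [Matrix.transpose_nonsing_inv, hsymm]
  set E := mexp (t • A)
  have hE : E = Γh * (Γh⁻¹ * E * Γh) * Γh⁻¹ := by
    rw [Matrix.mul_assoc, Matrix.mul_assoc, hinv, Matrix.mul_one, ← Matrix.mul_assoc, hinv,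
      Matrix.one_mul]
  have h1 : u ⬝ᵥ E.mulVec x = (Γh.mulVec u) ⬝ᵥ (Γh⁻¹ * E * Γh).mulVec (Γh⁻¹.mulVec x) := by
    conv_lhs => rw [hE]
    rw [← Matrix.mulVec_mulVec, ← Matrix.mulVec_mulVec, Matrix.dotProduct_mulVec (v := u),
      ← Matrix.mulVec_transpose, hsymm]
  have h2 : (Γh.mulVec u) ⬝ᵥ (Γh.mulVec u) = u ⬝ᵥ Γ.mulVec u := by
    rw [Matrix.dotProduct_mulVec (v := Γh.mulVec u), ← Matrix.mulVec_transpose, hsymm,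
      Matrix.mulVec_mulVec, hΓhsq]
    exact dotProduct_comm _ _
  have h3 : (Γh⁻¹.mulVec x) ⬝ᵥ (Γh⁻¹.mulVec x) = x ⬝ᵥ Γ⁻¹.mulVec x := by
    rw [Matrix.dotProduct_mulVec (v := Γh⁻¹.mulVec x), ← Matrix.mulVec_transpose, hsyminv,
      Matrix.mulVec_mulVec]
    have : Γh⁻¹ * Γh⁻¹ = Γ⁻¹ := by rw [← hΓhsq, Matrix.mul_inv_rev]
    rw [this]
    exact dotProduct_comm _ _
  calc |u ⬝ᵥ E.mulVec x|
      = |(Γh.mulVec u) ⬝ᵥ (Γh⁻¹ * E * Γh).mulVec (Γh⁻¹.mulVec x)| := by rw [h1]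
    _ ≤ opNorm (Γh⁻¹ * E * Γh) * Real.sqrt ((Γh.mulVec u) ⬝ᵥ (Γh.mulVec u)) *
          Real.sqrt ((Γh⁻¹.mulVec x) ⬝ᵥ (Γh⁻¹.mulVec x)) := dot_mulVec_abs_le _ _ _
    _ ≤ Real.exp (-(lam * t)) * Real.sqrt (u ⬝ᵥ Γ.mulVec u) *
          Real.sqrt (x ⬝ᵥ Γ⁻¹.mulVec x) := by
        rw [h2, h3]
        gcongr
        first | exact hcontr t ht | positivity
    _ = qnorm Γ u * Real.exp (-(lam * t)) * qnorm Γ⁻¹ x := by unfold qnorm; ring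

lemma dot_flip {m n : ℕ} (A : Matrix (Fin m) (Fin n) ℝ) (x : Fin m → ℝ) (y : Fin n → ℝ) :
    x ⬝ᵥ A.mulVec y = (Aᵀ.mulVec x) ⬝ᵥ y := by
  rw [Matrix.dotProduct_mulVec, ← Matrix.mulVec_transpose]

/-- Rayleigh bound for a real symmetric matrix. -/
lemma rayleigh {d : ℕ} {C : Matrix (Fin d) (Fin d) ℝ} (hC : C.IsHermitian) {σ : ℝ}
    (hσ : ∀ i, hC.eigenvalues i ≤ σ) (w : Fin d → ℝ) :
    w ⬝ᵥ C.mulVec w ≤ σ * (w ⬝ᵥ w) := by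
  classical
  set U := (hC.eigenvectorUnitary : Matrix (Fin d) (Fin d) ℝ) with hU
  have hstar : star U = Uᵀ := by
    ext i j; simp [Matrix.conjTranspose_apply]
  have hUU : U * Uᵀ = 1 := by
    rw [← hstar]; exact (Matrix.mem_unitaryGroup_iff).mp hC.eigenvectorUnitary.2
  have hD : C = U * Matrix.diagonal hC.eigenvalues * Uᵀ := by
    have := hC.spectral_theorem
    rw [← hstar]
    simpa [hU] using this
  set y := Uᵀ.mulVec w with hy
  have h1 : w ⬝ᵥ C.mulVec w = y ⬝ᵥ (Matrix.diagonal hC.eigenvalues).mulVec y := by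
    conv_lhs => rw [hD]
    rw [← Matrix.mulVec_mulVec, ← Matrix.mulVec_mulVec, dot_flip]
  have h2 : y ⬝ᵥ y = w ⬝ᵥ w := by
    rw [hy, dot_flip, Matrix.transpose_transpose, Matrix.mulVec_mulVec, hUU,
      Matrix.one_mulVec]
  rw [h1, ← h2]
  have h3 : y ⬝ᵥ (Matrix.diagonal hC.eigenvalues).mulVec y =
      ∑ i, hC.eigenvalues i * (y i * y i) := by
    simp [dotProduct, Matrix.mulVec_diagonal]
    exact Finset.sum_congr rfl fun i _ => by ring
  rw [h3, dotProduct, Finset.mul_sum]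
  apply Finset.sum_le_sum
  intro i _
  exact mul_le_mul_of_nonneg_right (hσ i) (mul_self_nonneg _)

/-- Spectrum over ℂ of (the complexification of) a real symmetric matrix. -/
lemma spec_range {d : ℕ} {C : Matrix (Fin d) (Fin d) ℝ} (hC : C.IsHermitian) :
    spectrum ℂ (C.map Complex.ofReal) = Set.range (fun i => (hC.eigenvalues i : ℂ)) := by
  classical
  set U := (hC.eigenvectorUnitary : Matrix (Fin d) (Fin d) ℝ) with hU
  have hstar : star U = Uᵀ := by
    ext i j; simp [Matrix.conjTranspose_apply]
  have hUU : U * Uᵀ = 1 := by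
    rw [← hstar]; exact (Matrix.mem_unitaryGroup_iff).mp hC.eigenvectorUnitary.2
  have hUU' : Uᵀ * U = 1 := by
    rw [← hstar]; exact (Unitary.mem_iff.mp hC.eigenvectorUnitary.2).1
  have hD : C = U * Matrix.diagonal hC.eigenvalues * Uᵀ := by
    have := hC.spectral_theorem
    rw [← hstar]
    simpa [hU] using this
  have hmap : C.map Complex.ofReal =
      (U.map Complex.ofReal) * (Matrix.diagonal fun i => (hC.eigenvalues i : ℂ)) *
        (Uᵀ.map Complex.ofReal) := by
    conv_lhs => rw [hD]
    rw [show (Complex.ofReal : ℝ → ℂ) = ⇑Complex.ofRealHom from rfl]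
    rw [Matrix.map_mul (f := Complex.ofRealHom), Matrix.map_mul (f := Complex.ofRealHom)]
    congr 1
    ext i j
    simp [Matrix.diagonal_apply]
  have hmap1 : (U.map Complex.ofReal) * (Uᵀ.map Complex.ofReal) = 1 := by
    rw [show (Complex.ofReal : ℝ → ℂ) = ⇑Complex.ofRealHom from rfl,
      ← Matrix.map_mul (f := Complex.ofRealHom), hUU]
    exact Matrix.map_one _ (map_zero _) (map_one _)
  have hmap2 : (Uᵀ.map Complex.ofReal) * (U.map Complex.ofReal) = 1 := by
    rw [show (Complex.ofReal : ℝ → ℂ) = ⇑Complex.ofRealHom from rfl,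
      ← Matrix.map_mul (f := Complex.ofRealHom), hUU']
    exact Matrix.map_one _ (map_zero _) (map_one _)
  let uU : (Matrix (Fin d) (Fin d) ℂ)ˣ :=
    ⟨U.map Complex.ofReal, Uᵀ.map Complex.ofReal, hmap1, hmap2⟩
  have hsp : spectrum ℂ (C.map Complex.ofReal) =
      spectrum ℂ (Matrix.diagonal fun i => (hC.eigenvalues i : ℂ)) := by
    rw [hmap]
    exact spectrum.units_conjugate (u := uU)
  rw [hsp, spectrum_diagonal]

open scoped MatrixOrder in
lemma tau_bound {n d : ℕ} (P Θ Γ : Matrix (Fin n) (Fin n) ℝ) (S : Matrix (Fin d) (Fin n) ℝ)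
    (hP : P.PosDef) (hΘ : Θᵀ = -Θ) (hΓ : Γ.PosDef) (hS : S.rank = d) (σ : ℝ)
    (hσ : σ = sSup ((fun μ => ‖μ‖) '' spectrum ℂ
      ((S * Θ * Γ⁻¹ * Θᵀ * Sᵀ * (S * P * Γ⁻¹ * P * Sᵀ)⁻¹).map Complex.ofReal))) :
    0 ≤ σ ∧ ∀ w : Fin d → ℝ,
      (Θ.mulVec (Sᵀ.mulVec w)) ⬝ᵥ Γ⁻¹.mulVec (Θ.mulVec (Sᵀ.mulVec w)) ≤
        σ * ((P.mulVec (Sᵀ.mulVec w)) ⬝ᵥ Γ⁻¹.mulVec (P.mulVec (Sᵀ.mulVec w))) := by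
  classical
  set M₁ := S * Θ * Γ⁻¹ * Θᵀ * Sᵀ with hM₁def
  set M₂ := S * P * Γ⁻¹ * P * Sᵀ with hM₂def
  have hΓi : Γ⁻¹.PosDef := hΓ.inv
  have hPH : Pᵀ = P := by
    have h : Pᴴ = P := hP.1
    rwa [Matrix.conjTranspose_eq_transpose_of_trivial] at h
  have hΓiH : Γ⁻¹ᵀ = Γ⁻¹ := by
    have h : Γ⁻¹ᴴ = Γ⁻¹ := hΓi.1
    rwa [Matrix.conjTranspose_eq_transpose_of_trivial] at h
  -- injectivity of Sᵀ and P
  have hStinj : Function.Injective (Sᵀ.mulVec) := by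
    have h1 : (Sᵀ).rank = d := by rw [Matrix.rank_transpose, hS]
    have h2 := LinearMap.finrank_range_add_finrank_ker (Sᵀ).mulVecLin
    rw [Module.finrank_pi, Fintype.card_fin] at h2
    have h3 : Module.finrank ℝ (LinearMap.range (Sᵀ).mulVecLin) = d := h1
    have h4 : Module.finrank ℝ (LinearMap.ker (Sᵀ).mulVecLin) = 0 := by omega
    have h5 : LinearMap.ker (Sᵀ).mulVecLin = ⊥ := Submodule.finrank_eq_zero.mp h4
    exact LinearMap.ker_eq_bot.mp h5
  have hPinj : Function.Injective (P.mulVec) := by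
    rw [Matrix.mulVec_injective_iff_isUnit]
    exact (Matrix.isUnit_iff_isUnit_det P).mpr (isUnit_iff_ne_zero.mpr (ne_of_gt hP.det_pos))
  -- quadratic form identities
  have hq1 : ∀ w : Fin d → ℝ, w ⬝ᵥ M₁.mulVec w =
      (Θ.mulVec (Sᵀ.mulVec w)) ⬝ᵥ Γ⁻¹.mulVec (Θ.mulVec (Sᵀ.mulVec w)) := by
    intro w
    have h : M₁.mulVec w = S.mulVec (Θ.mulVec (Γ⁻¹.mulVec (Θᵀ.mulVec (Sᵀ.mulVec w)))) := by
      simp [hM₁def, ← Matrix.mulVec_mulVec]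
    rw [h, dot_flip S w, dot_flip Θ, hΘ, Matrix.neg_mulVec]
    simp [Matrix.mulVec_neg]
  have hq2 : ∀ w : Fin d → ℝ, w ⬝ᵥ M₂.mulVec w =
      (P.mulVec (Sᵀ.mulVec w)) ⬝ᵥ Γ⁻¹.mulVec (P.mulVec (Sᵀ.mulVec w)) := by
    intro w
    have h : M₂.mulVec w = S.mulVec (P.mulVec (Γ⁻¹.mulVec (P.mulVec (Sᵀ.mulVec w)))) := by
      simp [hM₂def, ← Matrix.mulVec_mulVec]
    rw [h, dot_flip S w, dot_flip P, hPH]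
  -- M₂ is positive definite
  have hM₂ : M₂.PosDef := by
    refine Matrix.PosDef.of_dotProduct_mulVec_pos ?_ ?_
    · show M₂ᴴ = M₂
      rw [Matrix.conjTranspose_eq_transpose_of_trivial]
      simp [hM₂def, Matrix.transpose_mul, hPH, hΓiH, Matrix.transpose_transpose,
        Matrix.mul_assoc]
    · intro x hx
      have hx2 : P.mulVec (Sᵀ.mulVec x) ≠ 0 := by
        intro h
        apply hx
        apply hStinj
        have h1 : Sᵀ.mulVec x = 0 := by
          apply hPinj; simpa [Matrix.mulVec_zero] using h
        simpa [Matrix.mulVec_zero] using h1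
      have hpos := hΓi.dotProduct_mulVec_pos hx2
      have h : star x ⬝ᵥ M₂.mulVec x = x ⬝ᵥ M₂.mulVec x := by simp [star]
      rw [h, hq2 x]
      simpa [star] using hpos
  -- square root of M₂
  set B := CFC.sqrt M₂ with hBdef
  have hBpsd : B.PosSemidef := (CFC.sqrt_nonneg M₂).posSemidef
  have hBH : Bᵀ = B := by
    have h : Bᴴ = B := hBpsd.1
    rwa [Matrix.conjTranspose_eq_transpose_of_trivial] at h
  have hBB : B * B = M₂ := CFC.sqrt_mul_sqrt_self M₂ hM₂.posSemidef.nonneg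
  have hBdet : IsUnit B.det := by
    have hdd : B.det * B.det = M₂.det := by rw [← Matrix.det_mul, hBB]
    refine isUnit_iff_ne_zero.mpr (fun h => ?_)
    rw [h, mul_zero] at hdd
    exact (ne_of_gt hM₂.det_pos) hdd.symm
  have hBinv : B * B⁻¹ = 1 := Matrix.mul_nonsing_inv _ hBdet
  have hBinv' : B⁻¹ * B = 1 := Matrix.nonsing_inv_mul _ hBdet
  have hBiH : B⁻¹ᵀ = B⁻¹ := by rw [Matrix.transpose_nonsing_inv, hBH]
  set C := B⁻¹ * M₁ * B⁻¹ with hCdef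
  have hM₁H : M₁ᵀ = M₁ := by
    simp only [hM₁def, Matrix.transpose_mul, Matrix.transpose_transpose, hΓiH,
      Matrix.mul_assoc]
  have hCH : C.IsHermitian := by
    show Cᴴ = C
    rw [Matrix.conjTranspose_eq_transpose_of_trivial]
    rw [hCdef, Matrix.transpose_mul, Matrix.transpose_mul, hBiH, hM₁H]
    simp only [Matrix.mul_assoc]
  -- identify the spectrum
  have hconj : M₁ * M₂⁻¹ = B * C * B⁻¹ := by
    have e : B * (B⁻¹ * M₁ * B⁻¹) * B⁻¹ = (B * B⁻¹) * M₁ * (B⁻¹ * B⁻¹) := by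
      simp only [Matrix.mul_assoc]
    rw [hCdef, e, hBinv, Matrix.one_mul, ← hBB, Matrix.mul_inv_rev, Matrix.mul_assoc]
  have hmap1 : (B.map Complex.ofReal) * (B⁻¹.map Complex.ofReal) = 1 := by
    rw [show (Complex.ofReal : ℝ → ℂ) = ⇑Complex.ofRealHom from rfl,
      ← Matrix.map_mul (f := Complex.ofRealHom), hBinv]
    exact Matrix.map_one _ (map_zero _) (map_one _)
  have hmap2 : (B⁻¹.map Complex.ofReal) * (B.map Complex.ofReal) = 1 := by
    rw [show (Complex.ofReal : ℝ → ℂ) = ⇑Complex.ofRealHom from rfl,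
      ← Matrix.map_mul (f := Complex.ofRealHom), hBinv']
    exact Matrix.map_one _ (map_zero _) (map_one _)
  have hspec : spectrum ℂ ((M₁ * M₂⁻¹).map Complex.ofReal) =
      Set.range (fun i => (hCH.eigenvalues i : ℂ)) := by
    have hmm : (M₁ * M₂⁻¹).map Complex.ofReal =
        (B.map Complex.ofReal) * (C.map Complex.ofReal) * (B⁻¹.map Complex.ofReal) := by
      rw [hconj, show (Complex.ofReal : ℝ → ℂ) = ⇑Complex.ofRealHom from rfl,
        Matrix.map_mul (f := Complex.ofRealHom), Matrix.map_mul (f := Complex.ofRealHom)]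
    let uB : (Matrix (Fin d) (Fin d) ℂ)ˣ :=
      ⟨B.map Complex.ofReal, B⁻¹.map Complex.ofReal, hmap1, hmap2⟩
    rw [hmm, show spectrum ℂ ((B.map Complex.ofReal) * (C.map Complex.ofReal) *
        (B⁻¹.map Complex.ofReal)) = spectrum ℂ (C.map Complex.ofReal) from
      spectrum.units_conjugate (u := uB), spec_range hCH]
  -- eigenvalue bounds
  have habs : ∀ i, |hCH.eigenvalues i| ≤ σ := by
    intro i
    have hmem : (hCH.eigenvalues i : ℂ) ∈
        spectrum ℂ ((M₁ * M₂⁻¹).map Complex.ofReal) := by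
      rw [hspec]; exact ⟨i, rfl⟩
    have hbdd : BddAbove ((fun μ => ‖μ‖) ''
        spectrum ℂ ((M₁ * M₂⁻¹).map Complex.ofReal)) :=
      ((Matrix.finite_spectrum _).image _).bddAbove
    have hel : |hCH.eigenvalues i| ∈ (fun μ => ‖μ‖) ''
        spectrum ℂ ((M₁ * M₂⁻¹).map Complex.ofReal) :=
      ⟨_, hmem, by simp [Complex.norm_real]⟩
    rw [hσ]
    exact le_csSup hbdd hel
  have heig : ∀ i, hCH.eigenvalues i ≤ σ := fun i => le_trans (le_abs_self _) (habs i)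
  have hσ0 : 0 ≤ σ := by
    rcases isEmpty_or_nonempty (Fin d) with h|h
    · rw [hσ]
      have he : spectrum ℂ ((M₁ * M₂⁻¹).map Complex.ofReal) = ∅ := by
        rw [hspec, Set.range_eq_empty]
      rw [he, Set.image_empty, Real.sSup_empty]
    · obtain ⟨i⟩ := h
      exact le_trans (abs_nonneg _) (habs i)
  refine ⟨hσ0, fun w => ?_⟩
  have hM₁BCB : M₁ = B * C * B := by
    have e : B * (B⁻¹ * M₁ * B⁻¹) * B = (B * B⁻¹) * M₁ * (B⁻¹ * B) := by
      simp only [Matrix.mul_assoc]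
    rw [hCdef, e, hBinv, hBinv', Matrix.one_mul, Matrix.mul_one]
  calc (Θ.mulVec (Sᵀ.mulVec w)) ⬝ᵥ Γ⁻¹.mulVec (Θ.mulVec (Sᵀ.mulVec w))
      = w ⬝ᵥ M₁.mulVec w := (hq1 w).symm
    _ = (B.mulVec w) ⬝ᵥ C.mulVec (B.mulVec w) := by
        conv_lhs => rw [hM₁BCB]
        have h : (B * C * B).mulVec w = B.mulVec (C.mulVec (B.mulVec w)) := by
          simp [← Matrix.mulVec_mulVec]
        rw [h, dot_flip B w, hBH]
    _ ≤ σ * ((B.mulVec w) ⬝ᵥ (B.mulVec w)) := rayleigh hCH heig _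
    _ = σ * (w ⬝ᵥ M₂.mulVec w) := by
        congr 1
        rw [dot_flip B (B.mulVec w) w, hBH, Matrix.mulVec_mulVec, hBB]
        exact dotProduct_comm _ _
    _ = σ * ((P.mulVec (Sᵀ.mulVec w)) ⬝ᵥ Γ⁻¹.mulVec (P.mulVec (Sᵀ.mulVec w))) := by
        rw [hq2 w]

lemma dot_map_ofReal {m k : ℕ} (M : Matrix (Fin m) (Fin k) ℝ) (u : Fin m → ℝ) (w : Fin k → ℝ) :
    (fun i => ((u i : ℝ) : ℂ)) ⬝ᵥ (M.map Complex.ofReal).mulVec (fun i => ((w i : ℝ) : ℂ)) =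
      ((u ⬝ᵥ M.mulVec w : ℝ) : ℂ) := by
  simp only [dotProduct, Matrix.mulVec, Matrix.map_apply, Complex.ofReal_sum, Complex.ofReal_mul]

lemma Fintegrand_eq {n d : ℕ} (A P Θ : Matrix (Fin n) (Fin n) ℝ)
    (S : Matrix (Fin d) (Fin n) ℝ) (u : Fin n → ℝ) (w : Fin d → ℝ) (t : ℝ) :
    Fintegrand A P Θ S u w t =
      -(Real.exp (-(u ⬝ᵥ (mexp (t • A)).mulVec (P.mulVec (Sᵀ.mulVec w)))) *
        Real.sin (u ⬝ᵥ (mexp (t • A)).mulVec (Θ.mulVec (Sᵀ.mulVec w)))) := by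
  set E := mexp (t • A)
  set a := u ⬝ᵥ (E * P * Sᵀ).mulVec w with ha
  set b := u ⬝ᵥ (E * Θ * Sᵀ).mulVec w with hb
  have hmat : E.map Complex.ofReal *
      (P.map Complex.ofReal + Complex.I • Θ.map Complex.ofReal) * (Sᵀ).map Complex.ofReal =
      (E * P * Sᵀ).map Complex.ofReal + Complex.I • ((E * Θ * Sᵀ).map Complex.ofReal) := by
    rw [show (Complex.ofReal : ℝ → ℂ) = ⇑Complex.ofRealHom from rfl]
    rw [Matrix.map_mul (f := Complex.ofRealHom) (L := E * P),
      Matrix.map_mul (f := Complex.ofRealHom) (L := E),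
      Matrix.map_mul (f := Complex.ofRealHom) (L := E * Θ),
      Matrix.map_mul (f := Complex.ofRealHom) (L := E)]
    rw [Matrix.mul_add, Matrix.add_mul, Matrix.mul_smul, Matrix.smul_mul]
  have hdot : (fun i => ((u i : ℝ) : ℂ)) ⬝ᵥ
      (E.map Complex.ofReal * (P.map Complex.ofReal + Complex.I • Θ.map Complex.ofReal) *
        (Sᵀ).map Complex.ofReal).mulVec (fun i => ((w i : ℝ) : ℂ)) =
      (a : ℂ) + Complex.I * (b : ℂ) := by
    rw [hmat, Matrix.add_mulVec, dotProduct_add, Matrix.smul_mulVec, dotProduct_smul,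
      dot_map_ofReal, dot_map_ofReal, ← ha, ← hb]
    simp [smul_eq_mul]
  have ha' : u ⬝ᵥ E.mulVec (P.mulVec (Sᵀ.mulVec w)) = a := by
    rw [ha]; simp [Matrix.mulVec_mulVec, Matrix.mul_assoc]
  have hb' : u ⬝ᵥ E.mulVec (Θ.mulVec (Sᵀ.mulVec w)) = b := by
    rw [hb]; simp [Matrix.mulVec_mulVec, Matrix.mul_assoc]
  unfold Fintegrand
  rw [hdot, ha', hb']
  simp [Complex.exp_im, Complex.exp_re, Real.sin_neg]

lemma calc_int (lam c : ℝ) (hlam : 0 < lam) (hc : 0 ≤ c) :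
    IntegrableOn (fun t => c * Real.exp (-(lam*t)) * Real.exp (c * Real.exp (-(lam*t))))
      (Set.Ioi 0) ∧
    ∫ t in Set.Ioi (0:ℝ), c * Real.exp (-(lam*t)) * Real.exp (c * Real.exp (-(lam*t))) =
      (Real.exp c - 1) / lam := by
  set g := fun t => c * Real.exp (-(lam*t)) * Real.exp (c * Real.exp (-(lam*t))) with hg
  have hcont : Continuous g := by continuity
  have hbase : IntegrableOn (fun t => (c * Real.exp c) * Real.exp (-lam * t)) (Set.Ioi 0) :=
    (exp_neg_integrableOn_Ioi 0 hlam).const_mul _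
  have hbound : ∀ t ∈ Set.Ioi (0:ℝ), ‖g t‖ ≤ (c * Real.exp c) * Real.exp (-lam * t) := by
    intro t ht
    have ht0 : (0:ℝ) ≤ t := le_of_lt ht
    have h1 : Real.exp (-(lam*t)) ≤ 1 := by
      rw [Real.exp_le_one_iff]
      nlinarith
    have h2 : Real.exp (c * Real.exp (-(lam*t))) ≤ Real.exp c := by
      apply Real.exp_le_exp.mpr
      nlinarith [Real.exp_pos (-(lam*t))]
    have h3 : 0 < Real.exp (-(lam*t)) := Real.exp_pos _
    have expand : g t = c * Real.exp (-(lam*t)) * Real.exp (c * Real.exp (-(lam*t))) := rfl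
    rw [Real.norm_eq_abs, abs_of_nonneg (by rw [expand]; positivity), expand, neg_mul]
    nlinarith [mul_le_mul_of_nonneg_left h2 (mul_nonneg hc h3.le)]
  have hint : IntegrableOn g (Set.Ioi 0) := by
    apply Integrable.mono' hbase hcont.aestronglyMeasurable
    rw [ae_restrict_iff' measurableSet_Ioi]
    filter_upwards with t
    exact hbound t
  refine ⟨hint, ?_⟩
  set F := fun t => -(1/lam) * Real.exp (c * Real.exp (-(lam*t))) with hF
  have hderiv : ∀ t ∈ Set.Ioi (0:ℝ), HasDerivAt F (g t) t := by
    intro t ht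
    have h1 : HasDerivAt (fun t => -(lam*t)) (-lam) t := by
      simpa using ((hasDerivAt_id t).const_mul lam).fun_neg
    have h2 : HasDerivAt (fun t => c * Real.exp (-(lam*t)))
        (c * (Real.exp (-(lam*t)) * -lam)) t := (h1.exp).const_mul c
    have h3 := (h2.exp).const_mul (-(1/lam))
    refine h3.congr_deriv ?_
    rw [hg]
    field_simp
  have hcont0 : ContinuousWithinAt F (Set.Ici 0) 0 := by
    apply Continuous.continuousWithinAt
    continuity
  have h1 : Filter.Tendsto (fun t : ℝ => -(lam*t)) Filter.atTop Filter.atBot :=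
    Filter.tendsto_neg_atBot_iff.mpr (Filter.Tendsto.const_mul_atTop hlam Filter.tendsto_id)
  have h2 : Filter.Tendsto (fun t : ℝ => c * Real.exp (-(lam*t))) Filter.atTop (nhds 0) := by
    have := (Real.tendsto_exp_atBot.comp h1).const_mul c
    simpa using this
  have htend : Filter.Tendsto F Filter.atTop (nhds (-(1/lam))) := by
    have h3 : Filter.Tendsto (fun t : ℝ => Real.exp (c * Real.exp (-(lam*t)))) Filter.atTop
        (nhds (Real.exp 0)) := (Real.continuous_exp.continuousAt.tendsto).comp h2
    have h4 := h3.const_mul (-(1/lam))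
    simp only [hF]
    simpa using h4
  have hkey := integral_Ioi_of_hasDerivAt_of_tendsto hcont0 hderiv hint htend
  rw [hkey]
  have hF0 : F 0 = -(1/lam) * Real.exp c := by simp [hF]
  rw [hF0]
  field_simp
  ring

theorem stmt11 {n d : ℕ} (A P Θ Γ Γh : Matrix (Fin n) (Fin n) ℝ)
    (S : Matrix (Fin d) (Fin n) ℝ) (lam : ℝ) (hlam : 0 < lam)
    (hA : Hurwitz A) (hP : P.PosDef) (hΘ : Θᵀ = -Θ) (hΓ : Γ.PosDef)
    (hΓh : Γh.PosDef) (hΓhsq : Γh * Γh = Γ)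
    (hS : S.rank = d)
    (hcontr : ∀ t ≥ (0:ℝ), opNorm (Γh⁻¹ * mexp (t • A) * Γh) ≤ Real.exp (-(lam * t)))
    (τ : ℝ)
    (hτ : τ = Real.sqrt (sSup ((fun μ => ‖μ‖) ''
      spectrum ℂ ((S * Θ * Γ⁻¹ * Θᵀ * Sᵀ * (S * P * Γ⁻¹ * P * Sᵀ)⁻¹).map Complex.ofReal))))
    (u : Fin n → ℝ) (w : Fin d → ℝ) :
    IntegrableOn (Fintegrand A P Θ S u w) (Set.Ioi 0) ∧
    |2 * Real.exp (-(1/2) * (u ⬝ᵥ P.mulVec u + (Sᵀ.mulVec w) ⬝ᵥ P.mulVec (Sᵀ.mulVec w))) *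
        ∫ t in Set.Ioi (0:ℝ), Fintegrand A P Θ S u w t|
      ≤ (2 * τ / lam) *
          Real.exp (-(1/2) * (u ⬝ᵥ P.mulVec u + (Sᵀ.mulVec w) ⬝ᵥ P.mulVec (Sᵀ.mulVec w))) *
          (Real.exp (qnorm Γ u * qnorm Γ⁻¹ (P.mulVec (Sᵀ.mulVec w))) - 1) := by
  classical
  set p := P.mulVec (Sᵀ.mulVec w) with hp
  set v := Θ.mulVec (Sᵀ.mulVec w) with hv
  set c := qnorm Γ u * qnorm Γ⁻¹ p with hc
  have hq_nonneg : ∀ (M : Matrix (Fin n) (Fin n) ℝ) (x : Fin n → ℝ), 0 ≤ qnorm M x :=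
    fun M x => Real.sqrt_nonneg _
  have hc0 : 0 ≤ c := mul_nonneg (hq_nonneg _ _) (hq_nonneg _ _)
  obtain ⟨hσ0, hbnd⟩ := tau_bound P Θ Γ S hP hΘ hΓ hS _ rfl
  have hτ0 : 0 ≤ τ := hτ ▸ Real.sqrt_nonneg _
  have hqv : qnorm Γ⁻¹ v ≤ τ * qnorm Γ⁻¹ p := by
    have h := hbnd w
    unfold qnorm
    calc Real.sqrt (v ⬝ᵥ Γ⁻¹.mulVec v)
        ≤ Real.sqrt ((sSup ((fun μ => ‖μ‖) '' spectrum ℂ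
            ((S * Θ * Γ⁻¹ * Θᵀ * Sᵀ * (S * P * Γ⁻¹ * P * Sᵀ)⁻¹).map Complex.ofReal))) *
            (p ⬝ᵥ Γ⁻¹.mulVec p)) := Real.sqrt_le_sqrt h
      _ = τ * Real.sqrt (p ⬝ᵥ Γ⁻¹.mulVec p) := by
          rw [Real.sqrt_mul hσ0, hτ]
  -- pointwise bound
  have hpt : ∀ t ∈ Set.Ioi (0:ℝ), ‖Fintegrand A P Θ S u w t‖ ≤
      τ * (c * Real.exp (-(lam*t)) * Real.exp (c * Real.exp (-(lam*t)))) := by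
    intro t ht
    have ht0 : (0:ℝ) ≤ t := le_of_lt ht
    have hKa := key_est A Γ Γh lam hΓh hΓhsq hcontr u ht0 p
    have hKb := key_est A Γ Γh lam hΓh hΓhsq hcontr u ht0 v
    rw [Fintegrand_eq, Real.norm_eq_abs, abs_neg, abs_mul, Real.abs_exp]
    set a := u ⬝ᵥ (mexp (t • A)).mulVec p with haa
    set b := u ⬝ᵥ (mexp (t • A)).mulVec v with hbb
    have h1 : Real.exp (-a) ≤ Real.exp (c * Real.exp (-(lam*t))) := by
      apply Real.exp_le_exp.mpr
      calc -a ≤ |a| := neg_le_abs a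
        _ ≤ qnorm Γ u * Real.exp (-(lam * t)) * qnorm Γ⁻¹ p := hKa
        _ = c * Real.exp (-(lam*t)) := by rw [hc]; ring
    have h2 : |Real.sin b| ≤ τ * (c * Real.exp (-(lam*t))) := by
      calc |Real.sin b| ≤ |b| := Real.abs_sin_le_abs
        _ ≤ qnorm Γ u * Real.exp (-(lam * t)) * qnorm Γ⁻¹ v := hKb
        _ ≤ qnorm Γ u * Real.exp (-(lam * t)) * (τ * qnorm Γ⁻¹ p) := by
            exact mul_le_mul_of_nonneg_left hqv
              (mul_nonneg (hq_nonneg _ _) (Real.exp_pos _).le)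
        _ = τ * (c * Real.exp (-(lam*t))) := by rw [hc]; ring
    calc Real.exp (-a) * |Real.sin b|
        ≤ Real.exp (c * Real.exp (-(lam*t))) * (τ * (c * Real.exp (-(lam*t)))) :=
          mul_le_mul h1 h2 (abs_nonneg _) (Real.exp_pos _).le
      _ = τ * (c * Real.exp (-(lam*t)) * Real.exp (c * Real.exp (-(lam*t)))) := by ring
  obtain ⟨hint0, hval0⟩ := calc_int lam c hlam hc0
  have hgint : IntegrableOn
      (fun t => τ * (c * Real.exp (-(lam*t)) * Real.exp (c * Real.exp (-(lam*t)))))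
      (Set.Ioi 0) := hint0.const_mul τ
  have hFcont : Continuous (Fintegrand A P Θ S u w) := by
    have heq : Fintegrand A P Θ S u w = fun t =>
        -(Real.exp (-(u ⬝ᵥ (mexp (t • A)).mulVec p)) *
          Real.sin (u ⬝ᵥ (mexp (t • A)).mulVec v)) :=
      funext fun t => Fintegrand_eq A P Θ S u w t
    rw [heq]
    have hca := cont_dot A u p
    have hcb := cont_dot A u v
    exact ((hca.neg.rexp).mul (Real.continuous_sin.comp hcb)).neg
  have hFint : IntegrableOn (Fintegrand A P Θ S u w) (Set.Ioi 0) := by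
    apply Integrable.mono' hgint hFcont.aestronglyMeasurable
    rw [ae_restrict_iff' measurableSet_Ioi]
    filter_upwards with t
    exact hpt t
  refine ⟨hFint, ?_⟩
  have hIb : |∫ t in Set.Ioi (0:ℝ), Fintegrand A P Θ S u w t| ≤
      τ * ((Real.exp c - 1) / lam) := by
    have hnn := norm_integral_le_of_norm_le hgint (by
      rw [ae_restrict_iff' measurableSet_Ioi]
      filter_upwards with t
      exact hpt t)
    rw [Real.norm_eq_abs] at hnn
    calc |∫ t in Set.Ioi (0:ℝ), Fintegrand A P Θ S u w t|
        ≤ ∫ t in Set.Ioi (0:ℝ),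
            τ * (c * Real.exp (-(lam*t)) * Real.exp (c * Real.exp (-(lam*t)))) := hnn
      _ = τ * ∫ t in Set.Ioi (0:ℝ),
            c * Real.exp (-(lam*t)) * Real.exp (c * Real.exp (-(lam*t))) :=
          integral_const_mul _ _
      _ = τ * ((Real.exp c - 1) / lam) := by rw [hval0]
  set K := Real.exp (-(1/2) * (u ⬝ᵥ P.mulVec u + (Sᵀ.mulVec w) ⬝ᵥ P.mulVec (Sᵀ.mulVec w)))
    with hK
  have hK0 : 0 < K := Real.exp_pos _
  calc |2 * K * ∫ t in Set.Ioi (0:ℝ), Fintegrand A P Θ S u w t|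
      = 2 * K * |∫ t in Set.Ioi (0:ℝ), Fintegrand A P Θ S u w t| := by
        rw [abs_mul, abs_of_pos (by positivity : (0:ℝ) < 2 * K)]
    _ ≤ 2 * K * (τ * ((Real.exp c - 1) / lam)) := by
        apply mul_le_mul_of_nonneg_left hIb
        positivity
    _ = (2 * τ / lam) * K * (Real.exp c - 1) := by
        field_simp
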